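/- arXiv:1606.06360 — 2 statements merged into one kernel-verified Lean document; each statement's English description precedes it below -/
import Mathlib

section
/- If k ≥ 1 is even, then T_k(q) − q = (q−2)·∏_{j=1}^{(k−2)/2} (q − 2cos(2jπ/(k−1)))·∏_{j=1}^{k/2} (q − 2cos(2jπ/(k+1))) for all complex q. -/
noncomputable def T : ℕ → ℂ → ℂ
  | 0 => fun _ => 2
  | 1 => fun q => q
  | (n + 2) => fun q => q * T (n + 1) q - T n q

open Finset Complex

lemma Tz (z : ℂ) (hz : z ≠ 0) (k : ℕ) : T k (z + z⁻¹) = z ^ k + (z⁻¹) ^ k := by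
  induction k using Nat.strong_induction_on with
  | _ k ih =>
    match k with
    | 0 => simp [T]; norm_num
    | 1 => simp [T]
    | (n + 2) =>
      have h1 := ih (n + 1) (by omega)
      have h2 := ih n (by omega)
      simp only [T, h1, h2]
      linear_combination (z ^ n + z⁻¹ ^ n) * mul_inv_cancel₀ hz

lemma factor (z : ℂ) (hz : z ≠ 0) (θ : ℝ) :
    z * ((z + z⁻¹) - 2 * ((Real.cos θ : ℝ) : ℂ)) =
      (z - Complex.exp ((θ : ℂ) * Complex.I)) *
        (z - Complex.exp (-((θ : ℂ) * Complex.I))) := by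
  have h2 : Complex.exp ((θ:ℂ) * I) + Complex.exp (-((θ:ℂ) * I))
      = 2 * ((Real.cos θ : ℝ) : ℂ) := by
    rw [Complex.ofReal_cos, ← neg_mul, ← Complex.two_cos]
  have h1 : Complex.exp ((θ:ℂ) * I) * Complex.exp (-((θ:ℂ) * I)) = 1 := by
    rw [← Complex.exp_add]; simp
  have hzz : z * z⁻¹ = 1 := mul_inv_cancel₀ hz
  calc z * ((z + z⁻¹) - 2 * ((Real.cos θ : ℝ) : ℂ))
      = z * z + z * z⁻¹ - (Complex.exp ((θ:ℂ) * I) + Complex.exp (-((θ:ℂ) * I))) * z := by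
        rw [h2]; ring
    _ = _ := by rw [hzz, ← h1]; ring

lemma pairing (m : ℕ) (z : ℂ) :
    (z - 1) * ∏ j ∈ Finset.Icc 1 m,
      ((z - Complex.exp (((2 * j * Real.pi / (2 * m + 1) : ℝ) : ℂ) * Complex.I)) *
       (z - Complex.exp (-(((2 * j * Real.pi / (2 * m + 1) : ℝ) : ℂ) * Complex.I))))
    = z ^ (2 * m + 1) - 1 := by
  have hn0 : 2 * m + 1 ≠ 0 := by omega
  have hζ := Complex.isPrimitiveRoot_exp (2 * m + 1) hn0
  have hpoly := X_pow_sub_C_eq_prod hζ (Nat.pos_of_ne_zero hn0) (one_pow (2 * m + 1))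
  have hval := congrArg (Polynomial.eval z) hpoly
  simp only [Polynomial.eval_sub, Polynomial.eval_pow, Polynomial.eval_X, Polynomial.eval_C,
    Polynomial.eval_prod, Polynomial.eval_mul, mul_one] at hval
  have hterm : ∀ i : ℕ, Complex.exp (2 * Real.pi * Complex.I / (2 * m + 1 : ℕ)) ^ i
      = Complex.exp ((i : ℂ) * (2 * Real.pi * Complex.I / (2 * m + 1 : ℕ))) := by
    intro i; rw [Complex.exp_nat_mul]
  have hne : ((2 * m + 1 : ℕ) : ℂ) ≠ 0 := Nat.cast_ne_zero.mpr hn0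
  have hrange : Finset.range (2 * m + 1) = insert 0 (Finset.Icc 1 (2 * m)) := by
    ext x; simp [Finset.mem_range, Finset.mem_Icc]; omega
  rw [hrange, Finset.prod_insert (by simp), pow_zero] at hval
  rcases Nat.eq_zero_or_pos m with hm | hm
  · subst hm; simp at hval ⊢
  have hsplit : Finset.Icc 1 (2 * m) = Finset.Icc 1 m ∪ Finset.Icc (m + 1) (2 * m) := by
    ext x; simp [Finset.mem_Icc, Finset.mem_union]; omega
  have hdisj : Disjoint (Finset.Icc 1 m) (Finset.Icc (m + 1) (2 * m)) := by
    simp [Finset.disjoint_left, Finset.mem_Icc]; omega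
  rw [hsplit, Finset.prod_union hdisj] at hval
  have hfirst : ∀ j ∈ Finset.Icc 1 m,
      (z - Complex.exp (2 * Real.pi * Complex.I / (2 * m + 1 : ℕ)) ^ j)
      = (z - Complex.exp (((2 * j * Real.pi / (2 * m + 1) : ℝ) : ℂ) * Complex.I)) := by
    intro j _
    rw [hterm]
    congr 1
    push_cast
    field_simp
  have hreindex : ∏ i ∈ Finset.Icc (m + 1) (2 * m),
      (z - Complex.exp (2 * Real.pi * Complex.I / (2 * m + 1 : ℕ)) ^ i)
      = ∏ j ∈ Finset.Icc 1 m,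
      (z - Complex.exp (-(((2 * j * Real.pi / (2 * m + 1) : ℝ) : ℂ) * Complex.I))) := by
    refine Finset.prod_nbij' (fun i => 2 * m + 1 - i) (fun j => 2 * m + 1 - j) ?_ ?_ ?_ ?_ ?_
    · intro a ha; simp only [Finset.mem_Icc] at ha ⊢; omega
    · intro a ha; simp only [Finset.mem_Icc] at ha ⊢; omega
    · intro a ha; simp only [Finset.mem_Icc] at ha
      show 2 * m + 1 - (2 * m + 1 - a) = a; omega
    · intro a ha; simp only [Finset.mem_Icc] at ha
      show 2 * m + 1 - (2 * m + 1 - a) = a; omega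
    · intro a ha
      simp only [Finset.mem_Icc] at ha
      rw [hterm]
      congr 1
      have hc : ((2 * m + 1 - a : ℕ) : ℝ) = 2 * (m : ℝ) + 1 - a := by
        push_cast [Nat.cast_sub (show a ≤ 2 * m + 1 by omega)]; ring
      have hsum : ((a : ℂ)) * (2 * Real.pi * Complex.I / (2 * m + 1 : ℕ))
          = 2 * Real.pi * Complex.I
            + -(((2 * ((2 * m + 1 - a : ℕ) : ℝ) * Real.pi / (2 * m + 1) : ℝ) : ℂ) * Complex.I) := by
        rw [hc]
        have h21 : 2 * (m : ℂ) + 1 ≠ 0 := by push_cast at hne; exact hne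
        push_cast
        field_simp
        ring
      rw [hsum, Complex.exp_add, Complex.exp_two_pi_mul_I, one_mul]
  rw [Finset.prod_congr rfl hfirst, hreindex] at hval
  rw [Finset.prod_mul_distrib, hval]

theorem stmt_10 (k : ℕ) (hk : 1 ≤ k) (hke : Even k) (q : ℂ) :
    T k q - q = (q - 2) *
      (∏ j ∈ Finset.Icc 1 ((k - 2) / 2),
        (q - 2 * ((Real.cos (2 * j * Real.pi / (k - 1)) : ℝ) : ℂ))) *
      (∏ j ∈ Finset.Icc 1 (k / 2),
        (q - 2 * ((Real.cos (2 * j * Real.pi / (k + 1)) : ℝ) : ℂ))) := by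
  obtain ⟨a, rfl⟩ : ∃ a, k = 2 * a + 2 := by
    obtain ⟨c, hc⟩ := hke; exact ⟨c - 1, by omega⟩
  -- find z with z + z⁻¹ = q
  obtain ⟨w, hw⟩ := IsAlgClosed.exists_pow_nat_eq (q ^ 2 - 4) (two_pos)
  obtain ⟨z, hzeq⟩ : ∃ z : ℂ, z ^ 2 - q * z + 1 = 0 :=
    ⟨(q + w) / 2, by linear_combination hw / 4⟩
  have hz : z ≠ 0 := by
    intro h; rw [h] at hzeq; simp at hzeq
  have hq : q = z + z⁻¹ := by
    field_simp
    linear_combination -hzeq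
  have e1 : (2 * a + 2 - 2) / 2 = a := by omega
  have e2 : (2 * a + 2) / 2 = a + 1 := by omega
  rw [e1, e2, hq, Tz z hz]
  have hcard1 : (Finset.Icc 1 a).card = a := by simp
  have hcard2 : (Finset.Icc 1 (a + 1)).card = a + 1 := by simp
  have h1 : (∏ j ∈ Finset.Icc 1 a,
        ((z - Complex.exp (((2 * j * Real.pi / (2 * a + 1) : ℝ) : ℂ) * Complex.I)) *
         (z - Complex.exp (-(((2 * j * Real.pi / (2 * a + 1) : ℝ) : ℂ) * Complex.I)))))
      = z ^ a * ∏ j ∈ Finset.Icc 1 a,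
        ((z + z⁻¹) - 2 * ((Real.cos (2 * j * Real.pi / ((2 * a + 2 : ℕ) - 1)) : ℝ) : ℂ)) := by
    have step : ∀ j ∈ Finset.Icc 1 a,
        ((z - Complex.exp (((2 * j * Real.pi / (2 * a + 1) : ℝ) : ℂ) * Complex.I)) *
         (z - Complex.exp (-(((2 * j * Real.pi / (2 * a + 1) : ℝ) : ℂ) * Complex.I))))
        = z * ((z + z⁻¹) - 2 * ((Real.cos (2 * j * Real.pi / ((2 * a + 2 : ℕ) - 1)) : ℝ) : ℂ)) := by
      intro j hj
      rw [← factor z hz (2 * j * Real.pi / (2 * a + 1))]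
      have harg : (2 * (j:ℝ) * Real.pi / (((2 * a + 2 : ℕ) : ℝ) - 1))
          = 2 * (j:ℝ) * Real.pi / (2 * (a:ℝ) + 1) := by push_cast; ring_nf
      rw [harg]
    rw [Finset.prod_congr rfl step, Finset.prod_mul_distrib, Finset.prod_const, hcard1]
  have h2 : (∏ j ∈ Finset.Icc 1 (a + 1),
        ((z - Complex.exp (((2 * j * Real.pi / (2 * ((a + 1 : ℕ) : ℝ) + 1) : ℝ) : ℂ) * Complex.I)) *
         (z - Complex.exp (-(((2 * j * Real.pi / (2 * ((a + 1 : ℕ) : ℝ) + 1) : ℝ) : ℂ) * Complex.I)))))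
      = z ^ (a + 1) * ∏ j ∈ Finset.Icc 1 (a + 1),
        ((z + z⁻¹) - 2 * ((Real.cos (2 * j * Real.pi / ((2 * a + 2 : ℕ) + 1)) : ℝ) : ℂ)) := by
    have step : ∀ j ∈ Finset.Icc 1 (a + 1),
        ((z - Complex.exp (((2 * j * Real.pi / (2 * ((a + 1 : ℕ) : ℝ) + 1) : ℝ) : ℂ) * Complex.I)) *
         (z - Complex.exp (-(((2 * j * Real.pi / (2 * ((a + 1 : ℕ) : ℝ) + 1) : ℝ) : ℂ) * Complex.I))))
        = z * ((z + z⁻¹) - 2 * ((Real.cos (2 * j * Real.pi / ((2 * a + 2 : ℕ) + 1)) : ℝ) : ℂ)) := by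
      intro j hj
      rw [← factor z hz (2 * j * Real.pi / (2 * ((a + 1 : ℕ) : ℝ) + 1))]
      have harg : (2 * (j:ℝ) * Real.pi / (((2 * a + 2 : ℕ) : ℝ) + 1))
          = 2 * (j:ℝ) * Real.pi / (2 * ((a + 1 : ℕ) : ℝ) + 1) := by push_cast; ring_nf
      rw [harg]
    rw [Finset.prod_congr rfl step, Finset.prod_mul_distrib, Finset.prod_const, hcard2]
  have p1 := pairing a z
  have p2 := pairing (a + 1) z
  have hL : (z ^ (2 * a + 2) + (z⁻¹) ^ (2 * a + 2) - (z + z⁻¹)) * z ^ (2 * a + 2)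
      = (z ^ (2 * a + 1) - 1) * (z ^ (2 * (a + 1) + 1) - 1) := by
    have h3 : z ^ (2 * a + 2) * z⁻¹ ^ (2 * a + 2) = 1 := by
      rw [← mul_pow, mul_inv_cancel₀ hz, one_pow]
    linear_combination h3 - z ^ (2 * a + 1) * mul_inv_cancel₀ hz
  refine mul_right_cancel₀ (pow_ne_zero (2 * a + 2) hz) ?_
  rw [hL, ← p1, ← p2, h1, h2]
  linear_combination (-(z ^ (2 * a + 1)) * (∏ j ∈ Finset.Icc 1 a,
          ((z + z⁻¹) - 2 * ((Real.cos (2 * j * Real.pi / ((2 * a + 2 : ℕ) - 1)) : ℝ) : ℂ))) *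
      (∏ j ∈ Finset.Icc 1 (a + 1),
          ((z + z⁻¹) - 2 * ((Real.cos (2 * j * Real.pi / ((2 * a + 2 : ℕ) + 1)) : ℝ) : ℂ)))) *
      mul_inv_cancel₀ hz
end

section
/- Let Q ∈ SL(2,ℂ) with trace q ≠ 2. Then for every positive integer k, det(I + Q + Q² + ⋯ + Q^{k−1}) = (T_k(q) − 2)/(q − 2). -/
lemma det_sub_one (A : Matrix (Fin 2) (Fin 2) ℂ) :
    (A - 1).det = A.det - A.trace + 1 := by
  simp [Matrix.det_fin_two, Matrix.trace_fin_two, Matrix.one_apply]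
  ring

lemma ch' (a b c d : ℂ) (h : a * d - b * c = 1) :
    (!![a, b; c, d]) ^ 2 = (a + d) • !![a, b; c, d] - 1 := by
  rw [pow_two, Matrix.mul_fin_two, Matrix.one_fin_two, Matrix.smul_of]
  ext i j
  fin_cases i <;> fin_cases j <;> simp <;> first | linear_combination -h | ring

lemma cayley_hamilton (Q : Matrix (Fin 2) (Fin 2) ℂ) (hdet : Q.det = 1) :
    Q ^ 2 = Q.trace • Q - 1 := by
  rw [Matrix.det_fin_two] at hdet
  rw [Matrix.eta_fin_two Q, Matrix.trace_fin_two_of, ch' _ _ _ _ hdet]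

lemma trace_pow (Q : Matrix (Fin 2) (Fin 2) ℂ) (hdet : Q.det = 1) :
    ∀ n, (Q ^ n).trace = T n Q.trace := by
  intro n
  induction n using Nat.twoStepInduction with
  | zero => simp [T, Matrix.trace_one]
  | one => simp [T]
  | more n ih1 ih2 =>
    have : Q ^ (n + 2) = Q ^ n * Q ^ 2 := pow_add Q n 2
    rw [this, cayley_hamilton Q hdet, mul_sub, mul_one, Matrix.mul_smul,
      ← pow_succ, Matrix.trace_sub, Matrix.trace_smul, ih2, ih1]
    simp [T, smul_eq_mul]

theorem stmt_12 (Q : Matrix (Fin 2) (Fin 2) ℂ) (hdet : Q.det = 1)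
    (hq : Q.trace ≠ 2) (k : ℕ) (hk : 0 < k) :
    (∑ i ∈ Finset.range k, Q ^ i).det = (T k Q.trace - 2) / (Q.trace - 2) := by
  have hg : (∑ i ∈ Finset.range k, Q ^ i) * (Q - 1) = Q ^ k - 1 := geom_sum_mul Q k
  have hdets : (∑ i ∈ Finset.range k, Q ^ i).det * (Q - 1).det = (Q ^ k - 1).det := by
    rw [← Matrix.det_mul, hg]
  rw [det_sub_one, det_sub_one, hdet, Matrix.det_pow, hdet, trace_pow Q hdet,
    one_pow] at hdets
  have hne : Q.trace - 2 ≠ 0 := sub_ne_zero.mpr hq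
  field_simp
  linear_combination -hdets
end
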